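/- A complete fuzzy finite automaton F = (A, f) over an alphabet X is D3-directable if and only if every pair of its states has a D3-merging word, i.e., for all a, b ∈ A there exists w ∈ X* with F(a, w) ∩ F(b, w) ≠ ∅. -/
import Mathlib


open scoped Classical

/-- Extended fuzzy transition function `f*` of a fuzzy finite automaton. -/
noncomputable def fstar {A X : Type*} [Fintype A] [Nonempty A]
    (f : A → X → A → unitInterval) : A → List X → A → unitInterval
  | a, [], b => if b = a then 1 else 0
  | a, x :: v, b => Finset.univ.sup' Finset.univ_nonempty fun c => min (f a x c) (fstar f c v b)

/-- `F(a, w)`: the set of states reachable from `a` by `w` with positive degree. -/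
def freach {A X : Type*} [Fintype A] [Nonempty A]
    (f : A → X → A → unitInterval) (a : A) (w : List X) : Set A :=
  {b | 0 < fstar f a w b}

lemma fstar_nil {A X : Type*} [Fintype A] [Nonempty A]
    (f : A → X → A → unitInterval) (a b : A) :
    fstar f a [] b = if b = a then 1 else 0 := rfl

lemma fstar_cons {A X : Type*} [Fintype A] [Nonempty A]
    (f : A → X → A → unitInterval) (a b : A) (x : X) (v : List X) :
    fstar f a (x :: v) b =
      Finset.univ.sup' Finset.univ_nonempty fun c => min (f a x c) (fstar f c v b) := rfl

lemma fstar_pos_exists {A X : Type*} [Fintype A] [Nonempty A]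
    (f : A → X → A → unitInterval)
    (hcomp : ∀ (a : A) (x : X), ∃ b, 0 < f a x b) (a : A) (w : List X) :
    ∃ b, 0 < fstar f a w b := by
  induction w generalizing a with
  | nil =>
    refine ⟨a, ?_⟩
    rw [fstar_nil]
    simp
  | cons x v ih =>
    obtain ⟨c, hc⟩ := hcomp a x
    obtain ⟨b, hb⟩ := ih c
    refine ⟨b, lt_of_lt_of_le (lt_min hc hb) ?_⟩
    rw [fstar_cons]
    exact Finset.le_sup' (fun c => min (f a x c) (fstar f c v b)) (Finset.mem_univ c)

lemma fstar_append_le {A X : Type*} [Fintype A] [Nonempty A]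
    (f : A → X → A → unitInterval) (w u : List X) (a c e : A) :
    min (fstar f a w c) (fstar f c u e) ≤ fstar f a (w ++ u) e := by
  induction w generalizing a with
  | nil =>
    rw [fstar_nil]
    by_cases h : c = a
    · subst h
      simp
    · simp [h]
  | cons x v ih =>
    obtain ⟨d, _, hEq⟩ := Finset.exists_mem_eq_sup' (Finset.univ_nonempty (α := A))
      (fun d => min (f a x d) (fstar f d v c))
    rw [fstar_cons, hEq]
    calc min (min (f a x d) (fstar f d v c)) (fstar f c u e)
        = min (f a x d) (min (fstar f d v c) (fstar f c u e)) := min_assoc _ _ _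
      _ ≤ min (f a x d) (fstar f d (v ++ u) e) := min_le_min le_rfl (ih d)
      _ ≤ fstar f a (x :: (v ++ u)) e := by
          rw [fstar_cons]
          exact Finset.le_sup' (fun d => min (f a x d) (fstar f d (v ++ u) e))
            (Finset.mem_univ d)

lemma freach_append {A X : Type*} [Fintype A] [Nonempty A]
    (f : A → X → A → unitInterval) {w u : List X} {a c e : A}
    (h1 : c ∈ freach f a w) (h2 : e ∈ freach f c u) : e ∈ freach f a (w ++ u) :=
  lt_of_lt_of_le (lt_min h1 h2) (fstar_append_le f w u a c e)

lemma directing_of_merging {A X : Type*} [Fintype X] [Nonempty X] [Fintype A] [Nonempty A]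
    (f : A → X → A → unitInterval)
    (hcomp : ∀ (a : A) (x : X), ∃ b, 0 < f a x b)
    (hm : ∀ a b : A, ∃ w : List X, (freach f a w ∩ freach f b w).Nonempty) :
    ∀ n (S : Finset A), S.card ≤ n → S.Nonempty →
      ∃ (w : List X) (c : A), ∀ a ∈ S, c ∈ freach f a w := by
  intro n
  induction n with
  | zero =>
    intro S hcard hne
    simp [Finset.card_eq_zero.mp (Nat.le_zero.mp hcard)] at hne
  | succ n ih =>
    intro S hcard hne
    by_cases h1 : S.card ≤ 1
    · obtain ⟨a, ha⟩ := Finset.card_eq_one.mp (le_antisymm h1 (Finset.one_le_card.mpr hne))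
      refine ⟨[], a, ?_⟩
      intro b hb
      rw [ha, Finset.mem_singleton] at hb
      subst hb
      show 0 < fstar f b [] b
      rw [fstar_nil]; simp
    · push_neg at h1
      obtain ⟨a, ha, b, hb, hab⟩ := Finset.one_lt_card.mp h1
      obtain ⟨w, d, hd⟩ := hm a b
      obtain ⟨hda, hdb⟩ := hd
      have hchoose : ∀ t : A, ∃ e, e ∈ freach f t w := fun t => fstar_pos_exists f hcomp t w
      choose g hg using hchoose
      have h2 : ((S.erase a).erase b).card = S.card - 2 := by
        rw [Finset.card_erase_of_mem (Finset.mem_erase.mpr ⟨Ne.symm hab, hb⟩),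
          Finset.card_erase_of_mem ha]
        omega
      have hins := Finset.card_insert_le d (((S.erase a).erase b).image g)
      have himg := Finset.card_image_le (s := (S.erase a).erase b) (f := g)
      have hcard' : (insert d (((S.erase a).erase b).image g)).card ≤ n := by omega
      obtain ⟨u, c, hc⟩ := ih _ hcard' ⟨d, Finset.mem_insert_self _ _⟩
      refine ⟨w ++ u, c, ?_⟩
      intro t ht
      by_cases hta : t = a
      · exact freach_append f (hta ▸ hda) (hc d (Finset.mem_insert_self _ _))
      · by_cases htb : t = b
        · exact freach_append f (htb ▸ hdb) (hc d (Finset.mem_insert_self _ _))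
        · have htT : t ∈ (S.erase a).erase b :=
            Finset.mem_erase.mpr ⟨htb, Finset.mem_erase.mpr ⟨hta, ht⟩⟩
          exact freach_append f (hg t)
            (hc (g t) (Finset.mem_insert_of_mem (Finset.mem_image_of_mem g htT)))

/-- A complete FFA is D3-directable iff every pair of its states has a D3-merging word. -/
theorem stmt5 {A X : Type*} [Fintype X] [Nonempty X] [Fintype A] [Nonempty A]
    (f : A → X → A → unitInterval)
    (hcomp : ∀ (a : A) (x : X), ∃ b, 0 < f a x b) :
    (∃ w : List X, ∃ c, ∀ a, c ∈ freach f a w) ↔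
      ∀ a b : A, ∃ w : List X, (freach f a w ∩ freach f b w).Nonempty := by
  constructor
  · rintro ⟨w, c, hc⟩ a b
    exact ⟨w, c, hc a, hc b⟩
  · intro hm
    obtain ⟨w, c, hc⟩ := directing_of_merging f hcomp hm (Finset.univ.card)
      Finset.univ le_rfl Finset.univ_nonempty
    exact ⟨w, c, fun a => hc a (Finset.mem_univ a)⟩
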